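/- Let P(t) = (1/(t²+1))·(t·e₁ + e_{p+1})·(t·e₁ + e_{p+1})ᵀ ∈ ℝ^{(p+q)×(p+q)} for t ∈ ℝ. Then m(θ)·P(t)·m(θ) = λ(θ,t)·P(T_θ(t)), where T_θ(t) = (t + tanh θ)/(1 + t·tanh θ) and λ(θ,t) = (1/(t²+1))·[(t cosh θ + sinh θ)² + (t sinh θ + cosh θ)²], provided 1 + t·tanh θ ≠ 0. -/

import Mathlib

open Matrix

/-- The hyperbolic rotation `m(θ)` in the `(1, p+1)` coordinate plane of `ℝ^{p+q}`. -/
noncomputable def mMat (p q : ℕ) (θ : ℝ) : Matrix (Fin (p + q)) (Fin (p + q)) ℝ :=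
  Matrix.of fun i j =>
    if (i : ℕ) = 0 ∧ (j : ℕ) = 0 then Real.cosh θ
    else if (i : ℕ) = 0 ∧ (j : ℕ) = p then Real.sinh θ
    else if (i : ℕ) = p ∧ (j : ℕ) = 0 then Real.sinh θ
    else if (i : ℕ) = p ∧ (j : ℕ) = p then Real.cosh θ
    else if i = j then 1 else 0

/-- The vector `v(t) = t·e₁ + e_{p+1} ∈ ℝ^{p+q}`. -/
def vvec (p q : ℕ) (t : ℝ) : Fin (p + q) → ℝ :=
  fun i => if (i : ℕ) = 0 then t else if (i : ℕ) = p then 1 else 0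

/-- `P(t) = (1/(t²+1))·v(t)·v(t)ᵀ`. -/
noncomputable def Pmat (p q : ℕ) (t : ℝ) : Matrix (Fin (p + q)) (Fin (p + q)) ℝ :=
  (1 / (t ^ 2 + 1)) • Matrix.of fun i j => vvec p q t i * vvec p q t j

/-- `λ(θ,t) = (1/(t²+1))·[(t cosh θ + sinh θ)² + (t sinh θ + cosh θ)²]`. -/
noncomputable def lam (θ t : ℝ) : ℝ :=
  (1 / (t ^ 2 + 1)) *
    ((t * Real.cosh θ + Real.sinh θ) ^ 2 + (t * Real.sinh θ + Real.cosh θ) ^ 2)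

/-- Left multiplication of a rank-one matrix. -/
lemma mul_vecMulVec' {n : Type*} [Fintype n] (M : Matrix n n ℝ) (v w : n → ℝ) :
    M * Matrix.vecMulVec v w = Matrix.vecMulVec (M *ᵥ v) w := by
  ext i j
  simp [Matrix.mul_apply, Matrix.vecMulVec_apply, Matrix.mulVec, dotProduct,
    Finset.sum_mul, mul_assoc]

/-- Right multiplication of a rank-one matrix. -/
lemma vecMulVec_mul' {n : Type*} [Fintype n] (M : Matrix n n ℝ) (v w : n → ℝ) :
    Matrix.vecMulVec v w * M = Matrix.vecMulVec v (w ᵥ* M) := by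
  ext i j
  simp [Matrix.mul_apply, Matrix.vecMulVec_apply, Matrix.vecMul, dotProduct,
    Finset.mul_sum, mul_assoc]

lemma mMat_symm (p q : ℕ) (θ : ℝ) : (mMat p q θ)ᵀ = mMat p q θ := by
  ext i j
  simp only [Matrix.transpose_apply, mMat, Matrix.of_apply]
  by_cases h1 : (i : ℕ) = 0 <;> by_cases h2 : (j : ℕ) = 0 <;>
    by_cases h3 : (i : ℕ) = p <;> by_cases h4 : (j : ℕ) = p <;>
    simp [h1, h2, h3, h4, eq_comm]

/-- `m(θ)·P(t)·m(θ) = λ(θ,t)·P((t + tanh θ)/(1 + t·tanh θ))` when `1 + t·tanh θ ≠ 0`. -/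
theorem mMat_Pmat_mMat (p q : ℕ) (hp : 1 ≤ p) (hq : 1 ≤ q) (θ t : ℝ)
    (hden : 1 + t * Real.tanh θ ≠ 0) :
    mMat p q θ * Pmat p q t * mMat p q θ
      = lam θ t • Pmat p q ((t + Real.tanh θ) / (1 + t * Real.tanh θ)) := by
  have hpq0 : 0 < p + q := by omega
  have hppq : p < p + q := by omega
  set i0 : Fin (p + q) := ⟨0, hpq0⟩ with hi0
  set ip : Fin (p + q) := ⟨p, hppq⟩ with hip
  set a : ℝ := t * Real.cosh θ + Real.sinh θ with ha
  set b : ℝ := t * Real.sinh θ + Real.cosh θ with hb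
  set s : ℝ := (t + Real.tanh θ) / (1 + t * Real.tanh θ) with hs
  have hcosh : Real.cosh θ ≠ 0 := ne_of_gt (Real.cosh_pos θ)
  have htanh : Real.tanh θ = Real.sinh θ / Real.cosh θ := Real.tanh_eq_sinh_div_cosh θ
  have hbfac : b = Real.cosh θ * (1 + t * Real.tanh θ) := by
    rw [hb, htanh]; field_simp; ring
  have hbne : b ≠ 0 := by
    rw [hbfac]; exact mul_ne_zero hcosh hden
  have hden' : 1 + t * (Real.sinh θ / Real.cosh θ) ≠ 0 := by
    rw [← htanh]; exact hden
  have hcs : Real.cosh θ + t * Real.sinh θ ≠ 0 := by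
    intro h; apply hbne; rw [hb]; linarith
  have hbs : b * s = a := by
    rw [hbfac, hs, ha, htanh]
    field_simp
  have hne0p : (0 : ℕ) ≠ p := by omega
  have hi0ip : i0 ≠ ip := fun h => hne0p (congrArg Fin.val h)
  have hpne0 : p ≠ 0 := by omega
  have hk0 : ∀ k : Fin (p + q), k = i0 ↔ (k : ℕ) = 0 := by
    intro k
    constructor
    · rintro rfl; rfl
    · intro h; exact Fin.ext h
  have hkp : ∀ k : Fin (p + q), k = ip ↔ (k : ℕ) = p := by
    intro k
    constructor
    · rintro rfl; rfl
    · intro h; exact Fin.ext h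
  have hvi0 : ((i0 : Fin (p + q)) : ℕ) = 0 := rfl
  have hvip : ((ip : Fin (p + q)) : ℕ) = p := rfl
  have hvsplit : ∀ k : Fin (p + q), vvec p q t k
      = (if k = i0 then t else 0) + (if k = ip then 1 else 0) := by
    intro k
    simp only [vvec, hk0, hkp]
    by_cases h0 : (k : ℕ) = 0 <;> by_cases h1 : (k : ℕ) = p
    · exact absurd (h0.symm.trans h1) hne0p
    · simp [h0, h1, hne0p, hpne0]
    · simp [h0, h1, hne0p, hpne0]
    · simp [h0, h1, hne0p, hpne0]
  have hmv : mMat p q θ *ᵥ vvec p q t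
      = fun i : Fin (p + q) => if (i : ℕ) = 0 then a else if (i : ℕ) = p then b else 0 := by
    funext i
    simp only [Matrix.mulVec, dotProduct]
    have hterm : ∀ k, mMat p q θ i k * vvec p q t k
        = (if k = i0 then mMat p q θ i i0 * t else 0)
          + (if k = ip then mMat p q θ i ip else 0) := by
      intro k
      rw [hvsplit k]
      by_cases h0 : k = i0 <;> by_cases h1 : k = ip <;> simp [h0, h1, hi0ip, Ne.symm hi0ip]
    rw [Finset.sum_congr rfl (fun k _ => hterm k)]
    rw [Finset.sum_add_distrib, Finset.sum_ite_eq', Finset.sum_ite_eq']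
    simp only [Finset.mem_univ, if_true]
    simp only [mMat, Matrix.of_apply, hvi0, hvip, hk0, hkp]
    by_cases h0 : (i : ℕ) = 0 <;> by_cases h1 : (i : ℕ) = p
    · exact absurd (h0.symm.trans h1) hne0p
    · simp [h0, h1, hpne0, ha]; ring
    · simp [h0, h1, hpne0, hne0p, hb]; ring
    · simp [h0, h1, hpne0, hne0p]
  have hmvs : mMat p q θ *ᵥ vvec p q t = b • vvec p q s := by
    rw [hmv]
    funext i
    simp only [Pi.smul_apply, vvec, smul_eq_mul]
    by_cases h0 : (i : ℕ) = 0 <;> by_cases h1 : (i : ℕ) = p <;>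
      simp [h0, h1, hbs, mul_one]
  have hP : ∀ u : ℝ, Pmat p q u
      = (1 / (u ^ 2 + 1)) • Matrix.vecMulVec (vvec p q u) (vvec p q u) := fun u => rfl
  rw [hP t, hP s]
  rw [Matrix.mul_smul, Matrix.smul_mul, mul_vecMulVec', vecMulVec_mul']
  have hvm : vvec p q t ᵥ* mMat p q θ = b • vvec p q s := by
    rw [← mMat_symm p q θ, Matrix.vecMul_transpose, hmvs]
  rw [hmvs, hvm]
  have hrank : Matrix.vecMulVec (b • vvec p q s) (b • vvec p q s)
      = (b * b) • Matrix.vecMulVec (vvec p q s) (vvec p q s) := by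
    ext i j
    simp only [Matrix.vecMulVec_apply, Pi.smul_apply, smul_eq_mul, Matrix.smul_apply]
    ring
  rw [hrank, smul_smul, smul_smul]
  congr 1
  have ht2 : t ^ 2 + 1 ≠ 0 := by positivity
  have hsab : s = a / b := by
    rw [eq_div_iff hbne]
    linarith [hbs]
  have hab : a ^ 2 + b ^ 2 ≠ 0 := by positivity
  simp only [lam, ← ha, ← hb]
  rw [hsab]
  field_simp
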